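/- Let $H$ be a real Hilbert space and $A : D(A) \subset H \to H$ a positive self-adjoint operator. Let $N \ge 2$, $\tau = T/N$, and suppose $u^0, \ldots, u^N \in D(A^{1/2})$ satisfy the discrete wave equation $(\partial_\tau^2 u^n, w) + (A^{1/2} u^n, A^{1/2} w) = (f^n, w)$ for all $w \in D(A^{1/2})$ and $n = 2, \ldots, N$, where $f^2, \ldots, f^N \in H$. Then there exists a constant $C$ depending only on $T$ (and not on $\tau$, $u$, $f$) such that for all $n$, $\|A^{1/2}u^n\|^2 + \|\partial_\tau u^n\|^2 \le C\left(\|A^{1/2}u^1\|^2 + \|\partial_\tau u^1\|^2 + \tau\sum_{m=2}^N \|f^m\|^2\right)$, provided the CFL-type condition $\tau^2\|A^{1/2}w\|^2 \le \kappa^2\|w\|^2$ with $\kappa < 1$ holds on the relevant finite-dimensional subspace. -/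

import Mathlib

open RealInnerProductSpace

/-- Key one-step energy inequality for the implicit scheme: testing with `a = uⁿ - uⁿ⁻¹`. -/
lemma wave_aux_step {V E : Type} [NormedAddCommGroup V] [InnerProductSpace ℝ V]
    [NormedAddCommGroup E] [InnerProductSpace ℝ E]
    (τ : ℝ) (hτ : 0 < τ) (a b fv : V) (p q : E)
    (heq : (τ^2)⁻¹ * ⟪a - b, a⟫ + ⟪p, p - q⟫ = ⟪fv, a⟫) :
    ‖p‖^2 + (τ⁻¹)^2 * ‖a‖^2 ≤ ‖q‖^2 + (τ⁻¹)^2 * ‖b‖^2 + 2 * ‖fv‖ * ‖a‖ := by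
  rw [inner_sub_left, inner_sub_right, real_inner_self_eq_norm_sq,
    real_inner_self_eq_norm_sq, ← inv_pow] at heq
  have hba := real_inner_le_norm b a
  have hpq := real_inner_le_norm p q
  have hfa := real_inner_le_norm fv a
  have hinv : (0:ℝ) < (τ⁻¹)^2 := by positivity
  nlinarith [mul_le_mul_of_nonneg_left hba hinv.le,
    mul_nonneg hinv.le (sq_nonneg (‖a‖ - ‖b‖)), sq_nonneg (‖p‖ - ‖q‖)]

set_option maxHeartbeats 1600000 in
/-- Abstract discrete energy estimate for the second-order-in-time discretization of the
wave equation: if `(∂τ²uⁿ, w) + (A^{1/2}uⁿ, A^{1/2}w) = (fⁿ, w)` for all test elements `w`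
(`S` playing the role of `A^{1/2}`), then under the CFL-type condition
`τ²‖Sw‖² ≤ κ²‖w‖²` with `κ < 1`, the discrete energy is controlled by the data, with a
constant depending only on `T`. -/
theorem stmt_14 (T : ℝ) (hT : 0 < T) :
    ∃ C > 0, ∀ (V E : Type) [NormedAddCommGroup V] [InnerProductSpace ℝ V]
      [NormedAddCommGroup E] [InnerProductSpace ℝ E],
      ∀ (S : V →ₗ[ℝ] E) (N : ℕ), 2 ≤ N →
      ∀ (u f : ℕ → V) (κ : ℝ), κ < 1 →
      (∀ w : V, (T/N)^2 * ‖S w‖^2 ≤ κ^2 * ‖w‖^2) →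
      (∀ n : ℕ, 2 ≤ n → n ≤ N → ∀ w : V,
        ⟪((T/N)^2)⁻¹ • (u n - (2:ℝ) • u (n-1) + u (n-2)), w⟫ + ⟪S (u n), S w⟫ = ⟪f n, w⟫) →
      ∀ n : ℕ, 1 ≤ n → n ≤ N →
        ‖S (u n)‖^2 + ‖(T/N)⁻¹ • (u n - u (n-1))‖^2 ≤
          C * (‖S (u 1)‖^2 + ‖(T/N)⁻¹ • (u 1 - u 0)‖^2 +
            (T/N) * ∑ m ∈ Finset.Icc 2 N, ‖f m‖^2) := by
  refine ⟨2 + 8 * T, by positivity, ?_⟩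
  intro V E _ _ _ _ S N hN u f κ hκ hCFL hsch n hn1 hnN
  set τ : ℝ := T / (N:ℝ) with hτdef
  have hNpos : (0:ℝ) < (N:ℝ) := by exact_mod_cast (by omega : 0 < N)
  have hτ : 0 < τ := div_pos hT hNpos
  have hτ0 : τ ≠ 0 := hτ.ne'
  have hτN : τ * (N:ℝ) = T := by rw [hτdef]; field_simp
  clear_value τ
  set En : ℕ → ℝ := fun k => ‖S (u k)‖^2 + (τ⁻¹)^2 * ‖u k - u (k-1)‖^2 with hEn
  have hEnonneg : ∀ k, 0 ≤ En k := fun k => by positivity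
  set e : ℕ → ℝ := fun k => Real.sqrt (En k) with he
  have hesq : ∀ k, e k ^ 2 = En k := fun k => Real.sq_sqrt (hEnonneg k)
  have henn : ∀ k, 0 ≤ e k := fun k => Real.sqrt_nonneg _
  clear_value En e
  -- step inequality
  have hstep : ∀ m, 2 ≤ m → m ≤ N → e m ≤ e (m-1) + 2 * τ * ‖f m‖ := by
    intro m hm2 hmN
    obtain ⟨k, rfl⟩ : ∃ k, m = k + 2 := ⟨m - 2, by omega⟩
    have hi1 : k + 2 - 1 = k + 1 := rfl
    have hi2 : k + 2 - 2 = k := rfl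
    have hi3 : k + 1 - 1 = k := rfl
    have heq := hsch (k+2) hm2 hmN (u (k+2) - u (k+1))
    rw [hi1, hi2, real_inner_smul_left,
      show u (k+2) - (2:ℝ) • u (k+1) + u k
        = (u (k+2) - u (k+1)) - (u (k+1) - u k) from by module,
      show S (u (k+2) - u (k+1)) = S (u (k+2)) - S (u (k+1)) from map_sub S _ _] at heq
    have haux := wave_aux_step τ hτ (u (k+2) - u (k+1)) (u (k+1) - u k) (f (k+2))
      (S (u (k+2))) (S (u (k+1))) heq
    have hEm : En (k+2) = ‖S (u (k+2))‖^2 + (τ⁻¹)^2 * ‖u (k+2) - u (k+1)‖^2 := by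
      simp only [hEn]; rw [hi1]
    have hEm1 : En (k+1) = ‖S (u (k+1))‖^2 + (τ⁻¹)^2 * ‖u (k+1) - u k‖^2 := by
      simp only [hEn]; rw [hi3]
    have hEstep : En (k+2) ≤ En (k+1) + 2 * ‖f (k+2)‖ * ‖u (k+2) - u (k+1)‖ := by
      rw [hEm, hEm1]; linarith [haux]
    have hae : τ⁻¹ * ‖u (k+2) - u (k+1)‖ ≤ e (k+2) := by
      have hx : (τ⁻¹ * ‖u (k+2) - u (k+1)‖)^2 ≤ En (k+2) := by
        rw [hEm, mul_pow]
        linarith [sq_nonneg (‖S (u (k+2))‖)]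
      calc τ⁻¹ * ‖u (k+2) - u (k+1)‖
          = Real.sqrt ((τ⁻¹ * ‖u (k+2) - u (k+1)‖)^2) := by
            rw [Real.sqrt_sq (by positivity)]
        _ ≤ e (k+2) := by simp only [he]; exact Real.sqrt_le_sqrt hx
    have hfan : 0 ≤ ‖f (k+2)‖ := norm_nonneg _
    have hkey : (e (k+2))^2 ≤ (e (k+1))^2 + 2 * τ * ‖f (k+2)‖ * e (k+2) := by
      rw [hesq, hesq]
      have hrw : 2 * ‖f (k+2)‖ * ‖u (k+2) - u (k+1)‖
          = 2 * τ * ‖f (k+2)‖ * (τ⁻¹ * ‖u (k+2) - u (k+1)‖) := by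
        field_simp
      calc En (k+2) ≤ En (k+1) + 2 * ‖f (k+2)‖ * ‖u (k+2) - u (k+1)‖ := hEstep
        _ = En (k+1) + 2 * τ * ‖f (k+2)‖ * (τ⁻¹ * ‖u (k+2) - u (k+1)‖) := by
            rw [hrw]
        _ ≤ En (k+1) + 2 * τ * ‖f (k+2)‖ * e (k+2) := by
            have := mul_le_mul_of_nonneg_left hae
              (by positivity : (0:ℝ) ≤ 2 * τ * ‖f (k+2)‖)
            linarith
    rw [hi1]
    nlinarith [henn (k+2), henn (k+1),
      mul_nonneg (mul_nonneg (by norm_num : (0:ℝ) ≤ 2) hτ.le) hfan]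
  -- discrete Gronwall
  have main : ∀ m, 1 ≤ m → m ≤ N → e m ≤ e 1 + 2*τ*∑ j ∈ Finset.Icc 2 m, ‖f j‖ := by
    intro m
    induction m with
    | zero => omega
    | succ k ih =>
      intro h1 hle
      rcases Nat.lt_or_ge k 1 with hk0 | hk1
      · have hk : k = 0 := by omega
        subst hk
        simp [show Finset.Icc 2 1 = ∅ from Finset.Icc_eq_empty_of_lt (by omega)]
      · have h2 : 2 ≤ k+1 := by omega
        have hst := hstep (k+1) h2 hle
        rw [show k + 1 - 1 = k from rfl] at hst
        have ihk := ih hk1 (by omega)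
        rw [Finset.sum_Icc_succ_top (by omega : 2 ≤ k + 1)]
        nlinarith [norm_nonneg (f (k+1)), hτ.le]
  have hTot := main n hn1 hnN
  set Q := ∑ m ∈ Finset.Icc 2 N, ‖f m‖^2 with hQ
  set SN := ∑ j ∈ Finset.Icc 2 N, ‖f j‖ with hSN
  have hQnn : 0 ≤ Q := Finset.sum_nonneg fun i _ => by positivity
  have hSNnn : 0 ≤ SN := Finset.sum_nonneg fun i _ => norm_nonneg _
  have hSn_le : (∑ j ∈ Finset.Icc 2 n, ‖f j‖) ≤ SN :=
    Finset.sum_le_sum_of_subset_of_nonneg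
      (Finset.Icc_subset_Icc_right hnN) (fun i _ _ => norm_nonneg _)
  have hCS : SN^2 ≤ (N:ℝ) * Q := by
    have h := Finset.sum_mul_sq_le_sq_mul_sq (Finset.Icc 2 N)
      (fun _ => (1:ℝ)) (fun j => ‖f j‖)
    simp only [one_mul, one_pow, Finset.sum_const, nsmul_eq_mul, mul_one] at h
    have hcard : ((Finset.Icc 2 N).card : ℝ) ≤ (N:ℝ) := by
      rw [Nat.card_Icc]
      exact_mod_cast (by omega : N + 1 - 2 ≤ N)
    calc SN^2 ≤ ((Finset.Icc 2 N).card : ℝ) * Q := h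
      _ ≤ (N:ℝ) * Q := by nlinarith
  have hnorm : ∀ x : V, ‖τ⁻¹ • x‖^2 = (τ⁻¹)^2 * ‖x‖^2 := by
    intro x
    rw [norm_smul, mul_pow, Real.norm_eq_abs, sq_abs]
  have hgoal1 : ‖S (u n)‖^2 + ‖τ⁻¹ • (u n - u (n-1))‖^2 = En n := by
    simp only [hEn]; rw [hnorm]
  have hgoal2 : ‖S (u 1)‖^2 + ‖τ⁻¹ • (u 1 - u 0)‖^2 = En 1 := by
    simp only [hEn]; rw [show (1:ℕ) - 1 = 0 from rfl, hnorm]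
  rw [hgoal1, hgoal2]
  have h1 : e n ≤ e 1 + 2 * τ * SN := by
    have := mul_le_mul_of_nonneg_left hSn_le (by positivity : (0:ℝ) ≤ 2 * τ)
    linarith
  have h2a : (e n)^2 ≤ (e 1 + 2 * τ * SN)^2 := pow_le_pow_left₀ (henn n) h1 2
  have hen : (e n)^2 = En n := hesq n
  have he1 : (e 1)^2 = En 1 := hesq 1
  have hE1 : 0 ≤ En 1 := hEnonneg 1
  clear hsch hCFL hstep main hTot hEnonneg hesq henn hnorm hgoal1 hgoal2 hSn_le h1
  have hx3 : 0 ≤ (e 1 - 2 * (τ * SN))^2 := sq_nonneg _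
  have hx1 : (e 1 + 2 * τ * SN)^2
      = (e 1)^2 + 4 * (τ * SN) * e 1 + 4 * (τ * SN)^2 := by ring
  have hx4 : (e 1 - 2 * (τ * SN))^2
      = (e 1)^2 - 4 * (τ * SN) * e 1 + 4 * (τ * SN)^2 := by ring
  have h2 : En n ≤ 2 * En 1 + 8 * (τ * SN)^2 := by
    rw [← hen, ← he1]; linarith
  have h3 : (τ * SN)^2 ≤ τ * T * Q := by
    have hm : τ^2 * SN^2 ≤ τ^2 * ((N:ℝ) * Q) :=
      mul_le_mul_of_nonneg_left hCS (by positivity)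
    have hr : τ^2 * ((N:ℝ) * Q) = τ * T * Q := by rw [← hτN]; ring
    have hmp : (τ * SN)^2 = τ^2 * SN^2 := by ring
    linarith [hm, hr.le, hmp.le, hmp.ge]
  have h4 : En n ≤ 2 * En 1 + 8 * (τ * T * Q) := by linarith
  have hexp : (2 + 8 * T) * (En 1 + τ * Q)
      = 2 * En 1 + 8 * (τ * T * Q) + 2 * (τ * Q) + 8 * (T * En 1) := by ring
  rw [hexp]
  have hg1 : 0 ≤ τ * Q := mul_nonneg hτ.le hQnn
  have hg2 : 0 ≤ T * En 1 := mul_nonneg hT.le hE1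
  linarith
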